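/- Let f : X → X be an expansive homeomorphism of a compact metric space X with expansiveness constant δ, and assume X is connected with more than one point. Then for every sufficiently small γ > 0 there exists a point p ∈ X such that the connected component of p in W^s_δ(p) meets the sphere { y : d(p,y) = γ }, or the connected component of p in W^u_δ(p) meets that sphere. -/

import Mathlib

open Metric Filter Topology Set

/-- Local stable set of an invertible map. -/
def Ws {X : Type*} [MetricSpace X] (f : Equiv.Perm X) (ε : ℝ) (x : X) : Set X :=
  {y | ∀ n : ℕ, dist ((f ^ n) x) ((f ^ n) y) ≤ ε}

/-- Local unstable set of an invertible map. -/
def Wu {X : Type*} [MetricSpace X] (f : Equiv.Perm X) (ε : ℝ) (x : X) : Set X :=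
  {y | ∀ n : ℕ, dist ((f ^ (-(n : ℤ))) x) ((f ^ (-(n : ℤ))) y) ≤ ε}

section Aux

variable {X : Type*} [MetricSpace X]

lemma contPow (f : Equiv.Perm X) (hf : Continuous f) : ∀ k : ℕ, Continuous ⇑(f ^ k) := by
  intro k
  induction k with
  | zero => simpa using continuous_id
  | succ k ih =>
    have h : ⇑(f ^ (k + 1)) = ⇑(f ^ k) ∘ ⇑f := by
      rw [pow_succ, Equiv.Perm.coe_mul]
    rw [h]; exact ih.comp hf

lemma dist_le_on_closure {g : X → X} (hg : Continuous g) {S : Set X} {r : ℝ}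
    (h : ∀ x ∈ S, ∀ y ∈ S, dist (g x) (g y) ≤ r) :
    ∀ x ∈ closure S, ∀ y ∈ closure S, dist (g x) (g y) ≤ r := by
  have key : closure S ×ˢ closure S ⊆ {p : X × X | dist (g p.1) (g p.2) ≤ r} := by
    rw [← closure_prod_eq]
    refine closure_minimal ?_ ?_
    · rintro ⟨x, y⟩ ⟨hx, hy⟩
      exact h x hx y hy
    · exact isClosed_le ((hg.comp continuous_fst).dist (hg.comp continuous_snd))
        continuous_const
  intro x hx y hy
  exact key (mk_mem_prod hx hy)

/-- Boundary bumping: in a compact preconnected set `K` that is not contained in the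
closed ball of radius `c` around `z ∈ K`, the connected component of `z` in
`K ∩ closedBall z c` reaches the sphere of radius `c`. -/
lemma bump [CompactSpace X] {K : Set X} (hKc : IsCompact K) (hK : IsPreconnected K)
    {z w : X} (hz : z ∈ K) (hw : w ∈ K) {c : ℝ} (hc : 0 < c) (hcw : c < dist z w) :
    ∃ b ∈ connectedComponentIn (K ∩ closedBall z c) z, dist z b = c := by
  by_contra hcon
  push_neg at hcon
  set A : Set X := K ∩ closedBall z c with hA
  have hzA : z ∈ A := ⟨hz, mem_closedBall_self hc.le⟩
  have hAc : IsCompact A := hKc.inter_right isClosed_closedBall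
  haveI : CompactSpace A := isCompact_iff_compactSpace.mp hAc
  set z₀ : A := ⟨z, hzA⟩ with hz₀
  set S : Set A := {y : A | dist z (y : X) = c} with hS
  have hScl : IsClosed S :=
    isClosed_eq (continuous_const.dist continuous_subtype_val) continuous_const
  have hSc : IsCompact S := hScl.isCompact
  have hdisj : ∀ y ∈ connectedComponent z₀, y ∉ S := by
    intro y hy hyS
    refine hcon (y : X) ?_ hyS
    rw [connectedComponentIn_eq_image hzA]
    exact ⟨y, hy, rfl⟩
  have hcover : S ⊆ ⋃ Z : {Z : Set A // IsClopen Z ∧ z₀ ∈ Z}, (↑Z)ᶜ := by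
    intro y hyS
    by_contra hy
    simp only [mem_iUnion, mem_compl_iff, not_exists, not_not] at hy
    refine hdisj y ?_ hyS
    rw [connectedComponent_eq_iInter_isClopen z₀]
    exact mem_iInter.mpr hy
  obtain ⟨t, ht⟩ := hSc.elim_finite_subcover _ (fun Z => Z.2.1.compl.isOpen) hcover
  set U : Set A := ⋂ Z ∈ t, (Z : {Z : Set A // IsClopen Z ∧ z₀ ∈ Z}).1 with hU
  have hUclopen : IsClopen U := isClopen_biInter_finset fun Z _ => Z.2.1
  have hzU : z₀ ∈ U := mem_iInter₂.mpr fun Z _ => Z.2.2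
  have hUS : ∀ y ∈ U, y ∉ S := by
    intro y hyU hyS
    obtain ⟨Z, hZt, hyc⟩ := mem_iUnion₂.mp (ht hyS)
    exact hyc (mem_iInter₂.mp hyU Z hZt)
  set U' : Set X := Subtype.val '' U with hU'
  have hzU' : z ∈ U' := ⟨z₀, hzU, rfl⟩
  have hU'c : IsCompact U' := (hUclopen.isClosed.isCompact).image continuous_subtype_val
  have hU'ball : U' ⊆ ball z c := by
    rintro x ⟨y, hyU, rfl⟩
    have h1 : dist (y : X) z ≤ c := y.2.2
    have h2 : dist z (y : X) ≠ c := fun h => hUS y hyU h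
    rw [mem_ball]
    rw [dist_comm] at h2
    exact lt_of_le_of_ne h1 h2
  obtain ⟨V, hVopen, hVU⟩ := isOpen_induced_iff.mp hUclopen.isOpen
  set W := V ∩ ball z c with hW
  have hKW : K ∩ W = U' := by
    apply Subset.antisymm
    · rintro x ⟨hxK, hxV, hxball⟩
      have hxA : x ∈ A := ⟨hxK, ball_subset_closedBall hxball⟩
      refine ⟨⟨x, hxA⟩, ?_, rfl⟩
      rw [← hVU]
      exact hxV
    · rintro x ⟨y, hyU, rfl⟩
      refine ⟨y.2.1, ?_, hU'ball ⟨y, hyU, rfl⟩⟩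
      rw [← hVU] at hyU
      exact hyU
  have hwU' : w ∉ U' := by
    intro hw'
    have := hU'ball hw'
    rw [mem_ball, dist_comm] at this
    linarith
  have hKcover : K ⊆ W ∪ U'ᶜ := by
    intro x hxK
    by_cases hx : x ∈ U'
    · left
      have : x ∈ K ∩ W := hKW.symm ▸ hx
      exact this.2
    · right; exact hx
  have hne := hK W U'ᶜ (hVopen.inter isOpen_ball) hU'c.isClosed.isOpen_compl hKcover
    ⟨z, hz, (hKW.symm ▸ hzU' : z ∈ K ∩ W).2⟩ ⟨w, hw, hwU'⟩
  obtain ⟨x, hxK, hxW, hxUc⟩ := hne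
  exact hxUc (hKW ▸ (⟨hxK, hxW⟩ : x ∈ K ∩ W))

/-- A stable witness: a preconnected set containing two `c`-separated points all of
whose pairs stay `δ`-close during the first `n` forward iterates. -/
def StWit (f : Equiv.Perm X) (δ c : ℝ) (n : ℕ) : Prop :=
  ∃ A : Set X, ∃ p q : X, IsPreconnected A ∧ p ∈ A ∧ q ∈ A ∧ c ≤ dist p q ∧
    ∀ k ≤ n, ∀ x ∈ A, ∀ y ∈ A, dist ((f ^ k) x) ((f ^ k) y) ≤ δ

lemma dichotomy [CompactSpace X] [ConnectedSpace X] {a b : X}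
    (f : Equiv.Perm X) (hf : Continuous f) (hf' : Continuous ⇑(f⁻¹))
    {δ : ℝ} {c : ℝ} (hc : 0 < c) (hc2 : 2 * c ≤ δ) (hcab : c < dist a b) :
    (∀ n, StWit f δ c n) ∨ (∀ n, StWit f⁻¹ δ c n) := by
  classical
  have main : ∀ n j : ℕ, StWit f δ c n ∨
      (∃ B : Set X, ∃ p q : X, IsPreconnected B ∧ p ∈ B ∧ q ∈ B ∧ c ≤ dist p q ∧
        (∀ x ∈ B, ∀ y ∈ B, dist x y ≤ 2 * c) ∧
        ∀ k ≤ j, ∀ x ∈ B, ∀ y ∈ B, dist ((f⁻¹ ^ k) x) ((f⁻¹ ^ k) y) ≤ δ) := by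
    intro n j
    induction j with
    | zero =>
      right
      obtain ⟨b', hb'mem, hb'⟩ :=
        bump isCompact_univ isPreconnected_univ (mem_univ a) (mem_univ b) hc hcab
      set B := connectedComponentIn (univ ∩ closedBall a c) a with hB
      have hBsub : B ⊆ univ ∩ closedBall a c := connectedComponentIn_subset _ _
      have hsmall : ∀ x ∈ B, ∀ y ∈ B, dist x y ≤ 2 * c := by
        intro x hx y hy
        have hx' : dist x a ≤ c := (hBsub hx).2
        have hy' : dist y a ≤ c := (hBsub hy).2
        calc dist x y ≤ dist x a + dist a y := dist_triangle _ _ _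
          _ ≤ c + c := add_le_add hx' (by rw [dist_comm]; exact hy')
          _ = 2 * c := by ring
      refine ⟨B, a, b', isPreconnected_connectedComponentIn,
        mem_connectedComponentIn ⟨mem_univ a, mem_closedBall_self hc.le⟩, hb'mem,
        hb'.symm.le, hsmall, ?_⟩
      intro k hk x hx y hy
      have hk0 : k = 0 := Nat.le_zero.mp hk
      subst hk0
      simp only [pow_zero, Equiv.Perm.one_apply]
      exact le_trans (hsmall x hx y hy) hc2
    | succ j ih =>
      rcases ih with h | ⟨B, p, q, hB, hp, hq, hpq, hsmall, hback⟩
      · left; exact h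
      by_cases hfwd : ∀ k ≤ n, ∀ x ∈ B, ∀ y ∈ B, dist ((f ^ k) x) ((f ^ k) y) ≤ δ
      · left; exact ⟨B, p, q, hB, hp, hq, hpq, hfwd⟩
      right
      push_neg at hfwd
      have hex : ∃ k : ℕ, ∃ x ∈ B, ∃ y ∈ B, δ < dist ((f ^ k) x) ((f ^ k) y) := by
        obtain ⟨k, -, hk⟩ := hfwd
        exact ⟨k, hk⟩
      set m := Nat.find hex with hmdef
      obtain ⟨x₀, hx₀, y₀, hy₀, hdist⟩ := Nat.find_spec hex
      have hmin : ∀ k, k < m → ∀ x ∈ B, ∀ y ∈ B, dist ((f ^ k) x) ((f ^ k) y) ≤ δ := by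
        intro k hk
        have := Nat.find_min hex hk
        push_neg at this
        exact this
      have hm1 : 1 ≤ m := by
        by_contra hm0
        push_neg at hm0
        have hm0' : m = 0 := by omega
        rw [← hmdef] at hdist
        rw [hm0'] at hdist
        simp only [pow_zero, Equiv.Perm.one_apply] at hdist
        have h0 := hsmall x₀ hx₀ y₀ hy₀
        linarith
      set K := closure ((⇑(f ^ m)) '' B) with hK
      have hKc : IsCompact K := isClosed_closure.isCompact
      have hKpre : IsPreconnected K := (hB.image _ (contPow f hf m).continuousOn).closure
      set z := (f ^ m) x₀ with hzdef
      set w := (f ^ m) y₀ with hwdef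
      have hzK : z ∈ K := subset_closure ⟨x₀, hx₀, rfl⟩
      have hwK : w ∈ K := subset_closure ⟨y₀, hy₀, rfl⟩
      have hczw : c < dist z w := by
        have : c < δ := by linarith
        linarith
      obtain ⟨b', hb'mem, hb'⟩ := bump hKc hKpre hzK hwK hc hczw
      set C := connectedComponentIn (K ∩ closedBall z c) z with hC
      have hCsub : C ⊆ K ∩ closedBall z c := connectedComponentIn_subset _ _
      have hCsmall : ∀ x ∈ C, ∀ y ∈ C, dist x y ≤ 2 * c := by
        intro x hx y hy
        have hx' : dist x z ≤ c := (hCsub hx).2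
        have hy' : dist y z ≤ c := (hCsub hy).2
        calc dist x y ≤ dist x z + dist z y := dist_triangle _ _ _
          _ ≤ c + c := add_le_add hx' (by rw [dist_comm]; exact hy')
          _ = 2 * c := by ring
      refine ⟨C, z, b', isPreconnected_connectedComponentIn,
        mem_connectedComponentIn ⟨hzK, mem_closedBall_self hc.le⟩, hb'mem,
        hb'.symm.le, hCsmall, ?_⟩
      intro k hk
      rcases Nat.eq_zero_or_pos k with rfl | hk1
      · intro x hx y hy
        simp only [pow_zero, Equiv.Perm.one_apply]
        exact le_trans (hCsmall x hx y hy) hc2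
      have hgcont : Continuous ⇑(f⁻¹ ^ k) := contPow f⁻¹ hf' k
      have hcore : ∀ u ∈ (⇑(f ^ m)) '' B, ∀ v ∈ (⇑(f ^ m)) '' B,
          dist ((f⁻¹ ^ k) u) ((f⁻¹ ^ k) v) ≤ δ := by
        rintro _ ⟨x', hx', rfl⟩ _ ⟨y', hy', rfl⟩
        rcases le_or_gt k m with hkm | hmk
        · have hcomp : ∀ u : X, (f⁻¹ ^ k) ((f ^ m) u) = (f ^ (m - k)) u := by
            intro u
            have h1 : (f⁻¹ ^ k) * (f ^ m) = f ^ (m - k) := by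
              have h2 : f ^ m = f ^ k * f ^ (m - k) := by
                rw [← pow_add, Nat.add_sub_cancel' hkm]
              rw [inv_pow, h2, inv_mul_cancel_left]
            rw [← Equiv.Perm.mul_apply, h1]
          rw [hcomp, hcomp]
          exact hmin (m - k) (by omega) x' hx' y' hy'
        · have hcomp : ∀ u : X, (f⁻¹ ^ k) ((f ^ m) u) = (f⁻¹ ^ (k - m)) u := by
            intro u
            have h1 : (f⁻¹ ^ k) * (f ^ m) = f⁻¹ ^ (k - m) := by
              have h2 : f⁻¹ ^ k = f⁻¹ ^ (k - m) * f⁻¹ ^ m := by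
                rw [← pow_add, Nat.sub_add_cancel hmk.le]
              have h3 : f⁻¹ ^ m * f ^ m = 1 := by
                rw [inv_pow, inv_mul_cancel]
              rw [h2, mul_assoc, h3, mul_one]
            rw [← Equiv.Perm.mul_apply, h1]
          rw [hcomp, hcomp]
          exact hback (k - m) (by omega) x' hx' y' hy'
      intro x hx y hy
      exact dist_le_on_closure hgcont hcore x (hCsub hx).1 y (hCsub hy).1
  by_cases hstab : ∀ N, StWit f δ c N
  · left; exact hstab
  · right
    push_neg at hstab
    obtain ⟨N₀, hN₀⟩ := hstab
    intro n
    rcases main N₀ n with h | ⟨B, p, q, hB, hp, hq, hpq, -, hback⟩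
    · exact absurd h hN₀
    · exact ⟨B, p, q, hB, hp, hq, hpq, hback⟩

lemma Ls_preconnected [CompactSpace X] (B : ℕ → Set X) (hB : ∀ i, IsPreconnected (B i))
    (p : X) (pp : ℕ → X) (hpp : ∀ i, pp i ∈ B i) (hp : Tendsto pp atTop (𝓝 p)) :
    IsPreconnected (⋂ N : ℕ, closure (⋃ (i : ℕ) (_ : N ≤ i), B i)) := by
  set L := ⋂ N : ℕ, closure (⋃ (i : ℕ) (_ : N ≤ i), B i) with hL
  have hLclosed : IsClosed L := isClosed_iInter fun N => isClosed_closure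
  have hpL : p ∈ L := by
    refine mem_iInter.mpr fun N => mem_closure_of_tendsto hp ?_
    exact eventually_atTop.mpr ⟨N, fun i hi => mem_iUnion₂.mpr ⟨i, hi, hpp i⟩⟩
  rw [isPreconnected_iff_subset_of_fully_disjoint_closed hLclosed]
  intro u v hu hv huv hdisj
  by_contra hcon
  push_neg at hcon
  obtain ⟨hnu, hnv⟩ := hcon
  have key : ∀ u' v' : Set X, IsClosed u' → IsClosed v' → Disjoint u' v' →
      L ⊆ u' ∪ v' → p ∈ u' → (L ∩ v').Nonempty → False := by
    rintro u' v' hu' hv' hd hcover hpu ⟨zz, hzzL, hzzv⟩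
    have hK₁c : IsCompact (L ∩ u') := hLclosed.isCompact.inter_right hu'
    have hK₂cl : IsClosed (L ∩ v') := hLclosed.inter hv'
    have hdK : Disjoint (L ∩ u') (L ∩ v') :=
      hd.mono inter_subset_right inter_subset_right
    obtain ⟨r, hr, hT⟩ := hdK.exists_thickenings hK₁c hK₂cl
    have hev : ∃ N, ∀ i, N ≤ i →
        B i ⊆ thickening r (L ∩ u') ∪ thickening r (L ∩ v') := by
      by_contra hno
      push_neg at hno
      have hno' : ∀ N : ℕ, ∃ i, ∃ x, N ≤ i ∧ x ∈ B i ∧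
          x ∉ thickening r (L ∩ u') ∪ thickening r (L ∩ v') := by
        intro N
        obtain ⟨i, hiN, hsub⟩ := hno N
        obtain ⟨x, hxB, hxU⟩ := not_subset.mp hsub
        exact ⟨i, x, hiN, hxB, hxU⟩
      choose I x hI hxB hxU using hno'
      obtain ⟨xb, -, ψ, hψ, hxlim⟩ := isCompact_univ.tendsto_subseq
        (x := x) (fun N => mem_univ (x N))
      have hxbL : xb ∈ L := by
        refine mem_iInter.mpr fun N => mem_closure_of_tendsto hxlim ?_
        refine eventually_atTop.mpr ⟨N, fun j hj => ?_⟩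
        exact mem_iUnion₂.mpr ⟨I (ψ j),
          le_trans (le_trans hj (hψ.le_apply)) (hI (ψ j)), hxB (ψ j)⟩
      have hxbU : xb ∉ thickening r (L ∩ u') ∪ thickening r (L ∩ v') := by
        have hclosed : IsClosed ((thickening r (L ∩ u') ∪ thickening r (L ∩ v'))ᶜ) :=
          (isOpen_thickening.union isOpen_thickening).isClosed_compl
        exact hclosed.mem_of_tendsto hxlim (Eventually.of_forall fun j => hxU (ψ j))
      have : xb ∈ (L ∩ u') ∪ (L ∩ v') := by
        rcases hcover hxbL with h | h
        · exact Or.inl ⟨hxbL, h⟩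
        · exact Or.inr ⟨hxbL, h⟩
      exact hxbU (this.imp (fun h => self_subset_thickening hr _ h)
        (fun h => self_subset_thickening hr _ h))
    obtain ⟨N, hN⟩ := hev
    obtain ⟨N₁, hN₁⟩ := Metric.tendsto_atTop.mp hp r hr
    have hzzcl : zz ∈ closure (⋃ (i : ℕ) (_ : max N N₁ ≤ i), B i) :=
      mem_iInter.mp hzzL _
    obtain ⟨y, hyU, hzy⟩ := Metric.mem_closure_iff.mp hzzcl r hr
    obtain ⟨i, hiN, hyB⟩ := mem_iUnion₂.mp hyU
    have h1 : pp i ∈ thickening r (L ∩ u') :=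
      mem_thickening_iff.mpr ⟨p, ⟨hpL, hpu⟩, hN₁ i (le_trans (le_max_right _ _) hiN)⟩
    have h2 : y ∈ thickening r (L ∩ v') := by
      refine mem_thickening_iff.mpr ⟨zz, ⟨hzzL, hzzv⟩, ?_⟩
      rw [dist_comm]
      exact hzy
    obtain ⟨s, -, hs1, hs2⟩ := (hB i) (thickening r (L ∩ u')) (thickening r (L ∩ v'))
      isOpen_thickening isOpen_thickening (hN i (le_trans (le_max_left _ _) hiN))
      ⟨pp i, hpp i, h1⟩ ⟨y, hyB, h2⟩
    exact Set.disjoint_left.mp hT hs1 hs2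
  rcases huv hpL with hpu | hpv
  · obtain ⟨x, hxL, hxu⟩ := not_subset.mp hnu
    have hxv : x ∈ v := (huv hxL).resolve_left hxu
    exact key u v hu hv hdisj huv hpu ⟨x, hxL, hxv⟩
  · obtain ⟨x, hxL, hxv⟩ := not_subset.mp hnv
    have hxu : x ∈ u := (huv hxL).resolve_right hxv
    exact key v u hv hu hdisj.symm (fun y hy => (huv hy).symm) hpv ⟨x, hxL, hxu⟩

lemma limit [CompactSpace X] (g : Equiv.Perm X) (hg : Continuous ⇑g)
    {δ c : ℝ} (h : ∀ n, StWit g δ c n) :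
    ∃ A : Set X, ∃ p q : X, IsPreconnected A ∧ p ∈ A ∧ q ∈ A ∧ c ≤ dist p q ∧
      ∀ x ∈ A, ∀ k : ℕ, dist ((g ^ k) p) ((g ^ k) x) ≤ δ := by
  choose A P Q hA hP hQ hPQ hbound using h
  obtain ⟨⟨p, q⟩, -, φ, hφ, hlim⟩ := isCompact_univ.tendsto_subseq
    (x := fun n => ((P n, Q n) : X × X)) (fun n => mem_univ _)
  have hp : Tendsto (fun i => P (φ i)) atTop (𝓝 p) :=
    (continuous_fst.tendsto (p, q)).comp hlim
  have hq : Tendsto (fun i => Q (φ i)) atTop (𝓝 q) :=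
    (continuous_snd.tendsto (p, q)).comp hlim
  set L : Set X := ⋂ N : ℕ, closure (⋃ (i : ℕ) (_ : N ≤ i), A (φ i)) with hLdef
  have hpL : p ∈ L := by
    refine mem_iInter.mpr fun N => mem_closure_of_tendsto hp ?_
    exact eventually_atTop.mpr ⟨N, fun i hi => mem_iUnion₂.mpr ⟨i, hi, hP (φ i)⟩⟩
  have hqL : q ∈ L := by
    refine mem_iInter.mpr fun N => mem_closure_of_tendsto hq ?_
    exact eventually_atTop.mpr ⟨N, fun i hi => mem_iUnion₂.mpr ⟨i, hi, hQ (φ i)⟩⟩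
  have hdistpq : c ≤ dist p q :=
    ge_of_tendsto' (hp.dist hq) (fun i => hPQ (φ i))
  have hLpre : IsPreconnected L :=
    Ls_preconnected (fun i => A (φ i)) (fun i => hA (φ i)) p
      (fun i => P (φ i)) (fun i => hP (φ i)) hp
  refine ⟨L, p, q, hLpre, hpL, hqL, hdistpq, ?_⟩
  intro x hxL k
  refine le_of_forall_pos_le_add ?_
  intro ε hε
  have hε2 : 0 < ε / 2 := by linarith
  have hgk : Continuous ⇑(g ^ k) := contPow g hg k
  obtain ⟨η, hη, hmod⟩ := Metric.continuous_iff.mp hgk x (ε / 2) hε2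
  have ht : Tendsto (fun i => (g ^ k) (P (φ i))) atTop (𝓝 ((g ^ k) p)) :=
    ((hgk.tendsto p).comp hp)
  obtain ⟨N₁, hN₁⟩ := Metric.tendsto_atTop.mp ht (ε / 2) hε2
  have hx' : x ∈ closure (⋃ (i : ℕ) (_ : max N₁ k ≤ i), A (φ i)) :=
    mem_iInter.mp hxL _
  obtain ⟨y, hyU, hxy⟩ := Metric.mem_closure_iff.mp hx' η hη
  obtain ⟨i, hiN, hyB⟩ := mem_iUnion₂.mp hyU
  have hk_le : k ≤ φ i :=
    le_trans (le_trans (le_max_right _ _) hiN) hφ.le_apply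
  have h1 : dist ((g ^ k) (P (φ i))) ((g ^ k) y) ≤ δ :=
    hbound (φ i) k hk_le _ (hP (φ i)) y hyB
  have h2 : dist ((g ^ k) y) ((g ^ k) x) < ε / 2 := by
    have := hmod y (by rw [dist_comm]; exact hxy)
    exact this
  have h3 : dist ((g ^ k) p) ((g ^ k) (P (φ i))) < ε / 2 := by
    have := hN₁ i (le_trans (le_max_left _ _) hiN)
    rw [dist_comm] at this
    exact this
  calc dist ((g ^ k) p) ((g ^ k) x)
      ≤ dist ((g ^ k) p) ((g ^ k) (P (φ i))) + dist ((g ^ k) (P (φ i))) ((g ^ k) y)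
        + dist ((g ^ k) y) ((g ^ k) x) := dist_triangle4 _ _ _ _
    _ ≤ ε / 2 + δ + ε / 2 := by
        exact add_le_add (add_le_add h3.le h1) h2.le
    _ = δ + ε := by ring

end Aux

/-- For an expansive homeomorphism of a nontrivial connected compact metric
space, for all sufficiently small γ there is a point whose connected local
stable or unstable component reaches the sphere of radius γ. -/
theorem stable_or_unstable_reaches_sphere {X : Type*} [MetricSpace X] [CompactSpace X]
    [ConnectedSpace X] [Nontrivial X]
    (f : Equiv.Perm X) (hf : Continuous f) (hf' : Continuous f.symm)
    (δ : ℝ) (hδ : 0 < δ)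
    (hexp : ∀ x y : X, (∀ n : ℤ, dist ((f ^ n) x) ((f ^ n) y) ≤ δ) → x = y) :
    ∃ γ₀ > 0, ∀ γ : ℝ, 0 < γ → γ < γ₀ → ∃ p : X,
      (connectedComponentIn (Ws f δ p) p ∩ Metric.sphere p γ).Nonempty ∨
      (connectedComponentIn (Wu f δ p) p ∩ Metric.sphere p γ).Nonempty := by
  obtain ⟨a, b, hab⟩ := exists_pair_ne X
  have hab' : 0 < dist a b := dist_pos.mpr hab
  set c := min (δ / 2) (dist a b / 2) with hcdef
  have hc0 : 0 < c := lt_min (by linarith) (by linarith)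
  have hc2 : 2 * c ≤ δ := by
    have := min_le_left (δ / 2) (dist a b / 2)
    have hcle : c ≤ δ / 2 := this
    linarith
  have hcab : c < dist a b := lt_of_le_of_lt (min_le_right _ _) (by linarith)
  have hfinv : Continuous ⇑(f⁻¹) := hf'
  have dich := dichotomy (a := a) (b := b) f hf hfinv hc0 hc2 hcab
  refine ⟨c, hc0, fun γ hγ0 hγc => ?_⟩
  rcases dich with hst | hun
  · obtain ⟨A, p, q, hA, hp, hq, hpq, hb⟩ := limit f hf hst
    have hWs : A ⊆ Ws f δ p := fun x hx k => hb x hx k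
    have hqC : q ∈ connectedComponentIn (Ws f δ p) p :=
      hA.subset_connectedComponentIn hp hWs hq
    have hpWs : p ∈ Ws f δ p := fun n => by simp [hδ.le]
    have hpC : p ∈ connectedComponentIn (Ws f δ p) p := mem_connectedComponentIn hpWs
    have hCpre : IsPreconnected (connectedComponentIn (Ws f δ p) p) :=
      isPreconnected_connectedComponentIn
    have hIVT := hCpre.intermediate_value hpC hqC
      (f := fun x => dist p x) (continuous_const.dist continuous_id).continuousOn
    have hγIcc : γ ∈ Icc (dist p p) (dist p q) := by
      constructor
      · simp [hγ0.le]
      · exact le_trans hγc.le (le_trans (le_of_eq rfl) hpq)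
    obtain ⟨x, hxC, hxγ⟩ := hIVT hγIcc
    exact ⟨p, Or.inl ⟨x, hxC, by simpa [dist_comm] using hxγ⟩⟩
  · obtain ⟨A, p, q, hA, hp, hq, hpq, hb⟩ := limit f⁻¹ hfinv hun
    have hWsWu : Ws f⁻¹ δ p = Wu f δ p := by
      have hpow : ∀ n : ℕ, (f⁻¹ ^ n : Equiv.Perm X) = f ^ (-(n : ℤ)) := by
        intro n
        rw [zpow_neg, zpow_natCast, inv_pow]
      ext y
      simp only [Ws, Wu, mem_setOf_eq, hpow]
    have hWs : A ⊆ Ws f⁻¹ δ p := fun x hx k => hb x hx k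
    have hqC : q ∈ connectedComponentIn (Ws f⁻¹ δ p) p :=
      hA.subset_connectedComponentIn hp hWs hq
    have hpWs : p ∈ Ws f⁻¹ δ p := fun n => by simp [hδ.le]
    have hpC : p ∈ connectedComponentIn (Ws f⁻¹ δ p) p := mem_connectedComponentIn hpWs
    have hCpre : IsPreconnected (connectedComponentIn (Ws f⁻¹ δ p) p) :=
      isPreconnected_connectedComponentIn
    have hIVT := hCpre.intermediate_value hpC hqC
      (f := fun x => dist p x) (continuous_const.dist continuous_id).continuousOn
    have hγIcc : γ ∈ Icc (dist p p) (dist p q) := by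
      constructor
      · simp [hγ0.le]
      · exact le_trans hγc.le hpq
    obtain ⟨x, hxC, hxγ⟩ := hIVT hγIcc
    rw [hWsWu] at hxC
    exact ⟨p, Or.inr ⟨x, hxC, by simpa [dist_comm] using hxγ⟩⟩
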